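/- Let (a_k), (b_k), (c_k) be sequences of positive reals with (c_k) increasing. If for every k ≥ 1, a_k² ≤ c_k + Σ_{j=1}^{k-1} b_j a_{j+1}, then for every k, max_{j=1,…,k} a_j ≤ √(c_k) + Σ_{j=1}^{k-1} b_j. -/

import Mathlib

theorem max_bound_of_quadratic_recursion
    (a b c : ℕ → ℝ)
    (ha : ∀ k, 1 ≤ k → 0 < a k) (hb : ∀ k, 1 ≤ k → 0 < b k)
    (hc : ∀ k, 1 ≤ k → 0 < c k)
    (hcmono : ∀ k l, 1 ≤ k → k ≤ l → c k ≤ c l)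
    (hrec : ∀ k, 1 ≤ k → (a k) ^ 2 ≤ c k + ∑ j ∈ Finset.Icc 1 (k - 1), b j * a (j + 1)) :
    ∀ k, 1 ≤ k → ∀ j, 1 ≤ j → j ≤ k →
      a j ≤ Real.sqrt (c k) + ∑ j ∈ Finset.Icc 1 (k - 1), b j := by
  intro k hk j hj hjk
  obtain ⟨m, hm, hmax⟩ := Finset.exists_max_image (Finset.Icc 1 k) a ⟨1, by simp [hk]⟩
  rw [Finset.mem_Icc] at hm
  have hja : a j ≤ a m := hmax j (Finset.mem_Icc.mpr ⟨hj, hjk⟩)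
  have hMpos : 0 < a m := ha m hm.1
  have hS : 0 ≤ ∑ i ∈ Finset.Icc 1 (k - 1), b i :=
    Finset.sum_nonneg fun i hi => (hb i (Finset.mem_Icc.mp hi).1).le
  have h1 : ∑ i ∈ Finset.Icc 1 (m - 1), b i * a (i + 1)
      ≤ ∑ i ∈ Finset.Icc 1 (m - 1), b i * a m := by
    apply Finset.sum_le_sum
    intro i hi
    obtain ⟨hi1, hi2⟩ := Finset.mem_Icc.mp hi
    exact mul_le_mul_of_nonneg_left
      (hmax (i + 1) (Finset.mem_Icc.mpr ⟨by omega, by omega⟩)) (hb i hi1).le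
  have h2 : ∑ i ∈ Finset.Icc 1 (m - 1), b i * a m
      ≤ ∑ i ∈ Finset.Icc 1 (k - 1), b i * a m := by
    apply Finset.sum_le_sum_of_subset_of_nonneg
      (Finset.Icc_subset_Icc_right (by omega))
    intro i hi _
    exact mul_nonneg (hb i (Finset.mem_Icc.mp hi).1).le hMpos.le
  have hkey : (a m) ^ 2 ≤ c k + (∑ i ∈ Finset.Icc 1 (k - 1), b i) * a m := by
    calc (a m) ^ 2 ≤ c m + ∑ i ∈ Finset.Icc 1 (m - 1), b i * a (i + 1) := hrec m hm.1
      _ ≤ c k + ∑ i ∈ Finset.Icc 1 (k - 1), b i * a m := by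
          have := hcmono m k hm.1 hm.2
          linarith [h1, h2]
      _ = c k + (∑ i ∈ Finset.Icc 1 (k - 1), b i) * a m := by rw [Finset.sum_mul]
  have hsq : Real.sqrt (c k) ^ 2 = c k := Real.sq_sqrt (hc k hk).le
  have hsnn : 0 ≤ Real.sqrt (c k) := Real.sqrt_nonneg _
  nlinarith [hkey, hsq, hsnn, hS, hMpos, hja]
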